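/- Let A → A' be a faithfully flat morphism of ℤ_p[p^r]-algebras, f : A[[x]] → A[[u]] an A-morphism, and let Ξ^r_A denote the set of p^r-earnest homomorphisms Ω̂_{A[[x]]/A} → Ω̂_{A[[u]]/A}. Then the sequence 0 → Ξ^r_A → Ξ^r_{A'} ⇉ Ξ^r_{A'⊗_A A'} is exact: a homomorphism over A is p^r-earnest if and only if its base change to A' is, and Ξ^r_A is the equalizer of the two base-change maps. -/
import Mathlib


open TensorProduct

noncomputable section

lemma myFF_inj {A A' : Type*} [CommRing A] [CommRing A'] [Algebra A A']
    [Module.FaithfullyFlat A A'] : Function.Injective (algebraMap A A') := by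
  intro x y hxy
  have h0 : algebraMap A A' (x - y) = 0 := by rw [map_sub, hxy, sub_self]
  set c := x - y with hc
  have hg : (c • LinearMap.id : A →ₗ[A] A) = 0 := by
    rw [Module.FaithfullyFlat.zero_iff_lTensor_zero A A']
    ext z
    show (c • LinearMap.id : A →ₗ[A] A).lTensor A' (z ⊗ₜ 1) = 0
    rw [LinearMap.lTensor_smul, LinearMap.smul_apply, LinearMap.lTensor_id,
      LinearMap.id_apply, smul_tmul', Algebra.smul_def, h0, zero_mul, zero_tmul]
  have := congrFun (congrArg DFunLike.coe hg) 1
  simp only [LinearMap.smul_apply, LinearMap.id_apply, smul_eq_mul, mul_one,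
    LinearMap.zero_apply] at this
  exact sub_eq_zero.mp this

lemma myFF_descent {A A' : Type*} [CommRing A] [CommRing A'] [Algebra A A']
    [Module.FaithfullyFlat A A'] (x : A')
    (hx : (1 : A') ⊗ₜ[A] x = x ⊗ₜ[A] (1 : A')) : ∃ a : A, algebraMap A A' a = x := by
  set f : A →ₗ[A] A' := Algebra.linearMap A A' with hf
  set d : A' →ₗ[A] A' ⊗[A] A' :=
    (Algebra.TensorProduct.includeRight (R := A) (A := A') (B := A')).toLinearMap -
    (Algebra.TensorProduct.includeLeft (R := A) (A := A') (B := A')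
      (S := A)).toLinearMap with hd
  have hdf : d ∘ₗ f = 0 := by
    ext a'
    simp only [hd, hf, LinearMap.comp_apply, LinearMap.sub_apply, AlgHom.toLinearMap_apply,
      Algebra.linearMap_apply, LinearMap.zero_apply]
    rw [Algebra.TensorProduct.includeRight.commutes, Algebra.TensorProduct.includeLeft.commutes,
      sub_self]
  have hex : Function.Exact f d := by
    apply Module.FaithfullyFlat.lTensor_reflects_exact A A'
    set σ : A' ⊗[A] (A' ⊗[A] A') →ₗ[A] A' ⊗[A] A' :=
      (LinearMap.mul' A A').rTensor A' ∘ₗ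
        (TensorProduct.assoc A A' A' A').symm.toLinearMap with hσ
    have key : ∀ z : A' ⊗[A] A',
        σ (d.lTensor A' z) = z - (LinearMap.mul' A A' z) ⊗ₜ[A] (1 : A') := by
      intro z
      induction z using TensorProduct.induction_on with
      | zero => simp
      | tmul x y =>
        simp only [LinearMap.lTensor_tmul, hd, LinearMap.sub_apply, AlgHom.toLinearMap_apply,
          Algebra.TensorProduct.includeRight_apply, Algebra.TensorProduct.includeLeft_apply,
          tmul_sub, map_sub, hσ, LinearMap.comp_apply, LinearEquiv.coe_coe,
          TensorProduct.assoc_symm_tmul, LinearMap.rTensor_tmul, LinearMap.mul'_apply,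
          mul_one]
      | add u v hu hv =>
        simp only [map_add, hu, hv, add_tmul]
        abel
    rw [LinearMap.exact_iff]
    apply le_antisymm
    · intro z hz
      have h0 : d.lTensor A' z = 0 := hz
      have := key z
      rw [h0, map_zero] at this
      refine ⟨(LinearMap.mul' A A' z) ⊗ₜ[A] (1 : A), ?_⟩
      rw [LinearMap.lTensor_tmul]
      simp only [hf, Algebra.linearMap_apply, map_one]
      rw [eq_comm, ← sub_eq_zero]
      exact this.symm
    · rw [LinearMap.range_le_ker_iff, ← LinearMap.lTensor_comp, hdf, LinearMap.lTensor_zero]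
  have hker : d x = 0 := by
    simp only [hd, LinearMap.sub_apply, AlgHom.toLinearMap_apply,
      Algebra.TensorProduct.includeRight_apply, Algebra.TensorProduct.includeLeft_apply,
      hx, sub_self]
  obtain ⟨a, ha⟩ := (hex x).mp hker
  exact ⟨a, ha⟩


/-- Faithfully flat descent for `p^r`-earnest homomorphisms.  Fix `π = p^r`
and `e i = i/p^r` in `A`, and the coefficients `a i` of `f`.  Earnestness of `δ` (with
coefficients `b i`) descends and the set `Ξ^r` of earnest homomorphisms is the equalizer
of the two base-change maps to `A' ⊗_A A'`: the sequence
`0 → Ξ^r_A → Ξ^r_{A'} ⇉ Ξ^r_{A'⊗A'}` is exact. -/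
theorem stmt11 (p : ℕ) [Fact (Nat.Prime p)]
    (A A' : Type*) [CommRing A] [CommRing A'] [Algebra A A']
    [Module.FaithfullyFlat A A']
    (π : A) (e : ℕ → A) (he : ∀ i : ℕ, p ∣ i → π * e i = (i : A))
    (a : ℕ → A) :
    -- earnestness is detected after faithfully flat base change
    (∀ b : ℕ → A,
      ((∀ i, ¬ p ∣ i → (i : A) * a i = π * b i) ∧
        (∀ i, p ∣ i → b i = e i * a i)) ↔
      ((∀ i, ¬ p ∣ i → (i : A') * algebraMap A A' (a i) =
          algebraMap A A' π * algebraMap A A' (b i)) ∧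
        (∀ i, p ∣ i → algebraMap A A' (b i) =
          algebraMap A A' (e i) * algebraMap A A' (a i)))) ∧
    -- left exactness: Ξ^r_A → Ξ^r_{A'} is injective
    (∀ b₁ b₂ : ℕ → A, (∀ i, algebraMap A A' (b₁ i) = algebraMap A A' (b₂ i)) → b₁ = b₂) ∧
    -- Ξ^r_A is the equalizer of the two maps Ξ^r_{A'} ⇉ Ξ^r_{A'⊗A'}
    (∀ b' : ℕ → A',
      ((∀ i, ¬ p ∣ i → (i : A') * algebraMap A A' (a i) = algebraMap A A' π * b' i) ∧
        (∀ i, p ∣ i → b' i = algebraMap A A' (e i) * algebraMap A A' (a i))) →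
      (∀ i, (Algebra.TensorProduct.includeLeft : A' →ₐ[A] A' ⊗[A] A') (b' i) =
        (Algebra.TensorProduct.includeRight : A' →ₐ[A] A' ⊗[A] A') (b' i)) →
      ∃ b : ℕ → A, (∀ i, algebraMap A A' (b i) = b' i) ∧
        (∀ i, ¬ p ∣ i → (i : A) * a i = π * b i) ∧
        (∀ i, p ∣ i → b i = e i * a i)) := by
  have inj : Function.Injective (algebraMap A A') := myFF_inj
  refine ⟨?_, ?_, ?_⟩
  · intro b
    constructor
    · rintro ⟨h1, h2⟩
      refine ⟨fun i hi => ?_, fun i hi => ?_⟩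
      · have := congrArg (algebraMap A A') (h1 i hi)
        simpa [map_mul, map_natCast] using this
      · have := congrArg (algebraMap A A') (h2 i hi)
        simpa [map_mul] using this
    · rintro ⟨h1, h2⟩
      refine ⟨fun i hi => inj ?_, fun i hi => inj ?_⟩
      · rw [map_mul, map_mul, map_natCast]
        exact h1 i hi
      · rw [map_mul]
        exact h2 i hi
  · intro b₁ b₂ h
    funext i
    exact inj (h i)
  · intro b' hear heq
    have hdesc : ∀ i, ∃ c : A, algebraMap A A' c = b' i := by
      intro i
      refine myFF_descent (b' i) ?_
      have := (heq i).symm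
      simpa [Algebra.TensorProduct.includeLeft_apply,
        Algebra.TensorProduct.includeRight_apply] using this
    choose b hb using hdesc
    refine ⟨b, hb, fun i hi => inj ?_, fun i hi => inj ?_⟩
    · rw [map_mul, map_mul, map_natCast, hb]
      exact hear.1 i hi
    · rw [map_mul, hb]
      exact hear.2 i hi
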